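/- Suppose for Lebesgue almost every x ∈ I₀, liminf_{n→∞} (1/n) log |Df^n(x)| ≥ λ > 0, where f^n = f_{n-1} ∘ ⋯ ∘ f_0 is a composition of C¹-uniformly equicontinuous and C¹-uniformly bounded maps f_k : I₀ → I₀. Then for every γ > 0 there exists ε > 0 such that for Lebesgue almost every x, limsup_{n→∞} (1/n) Σ_{j=0}^{n-1} χ_{V_ε𝒞}(f^j(x)) < γ, where χ_{V_ε𝒞}(f^j(x)) = 1 if dist(f^j(x), 𝒞_j) < ε and 0 otherwise. -/

import Mathlib

open Set MeasureTheory Filter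

noncomputable section

/-- `comp f n = f_{n-1} ∘ ⋯ ∘ f_0`, with `comp f 0 = id`. -/
def comp (f : ℕ → ℝ → ℝ) : ℕ → ℝ → ℝ
  | 0 => id
  | (n + 1) => f n ∘ comp f n

/-- `Dcomp f n x = ∏_{j<n} f_j'(f^j(x))`, the derivative of `f^n` at `x` by the chain rule. -/
def Dcomp (f : ℕ → ℝ → ℝ) (n : ℕ) (x : ℝ) : ℝ :=
  ∏ j ∈ Finset.range n, deriv (f j) (comp f j x)

/-- if a.e. point has Lyapunov exponent ≥ λ > 0 for the sequence of
compositions, then for every γ > 0 there is ε > 0 such that a.e. point visits the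
ε-neighborhood of the critical sets with asymptotic frequency < γ. -/
theorem ae_small_asymptotic_frequency_of_visits
    (a b Γ lam : ℝ) (hab : a ≤ b) (f : ℕ → ℝ → ℝ)
    (hC1 : ∀ k, ContDiff ℝ 1 (f k))
    (hmaps : ∀ k, MapsTo (f k) (Icc a b) (Icc a b))
    (hequi : ∀ ζ > (0 : ℝ), ∃ ε > (0 : ℝ), ∀ k, ∀ x ∈ Icc a b, ∀ y ∈ Icc a b,
      |x - y| < ε → |f k x - f k y| < ζ ∧ |deriv (f k) x - deriv (f k) y| < ζ)
    (hbdd : ∀ k, ∀ x ∈ Icc a b, |f k x| ≤ Γ ∧ |deriv (f k) x| ≤ Γ)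
    (hlam : 0 < lam)
    (hlyap : ∀ᵐ x ∂(volume.restrict (Icc a b)),
      lam ≤ liminf (fun n : ℕ => (1 / (n : ℝ)) * Real.log |Dcomp f n x|) atTop) :
    ∀ γ > (0 : ℝ), ∃ ε > (0 : ℝ), ∀ᵐ x ∂(volume.restrict (Icc a b)),
      limsup (fun n : ℕ => (1 / (n : ℝ)) *
        (Set.ncard {j : ℕ | j < n ∧ ∃ c ∈ Icc a b,
          deriv (f j) c = 0 ∧ |comp f j x - c| < ε} : ℝ)) atTop < γ := by
  intro γ hγ
  classical
  set Γ' : ℝ := max Γ 1 with hΓ'def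
  have hΓ'1 : (1 : ℝ) ≤ Γ' := le_max_right _ _
  have hΓ'pos : (0 : ℝ) < Γ' := lt_of_lt_of_le one_pos hΓ'1
  set L : ℝ := Real.log Γ' with hLdef
  have hL : 0 ≤ L := Real.log_nonneg hΓ'1
  set ζ : ℝ := Real.exp (min ((lam / 2 - L) / (γ / 2) - 1) (-1)) with hζdef
  have hζpos : 0 < ζ := Real.exp_pos _
  have hlogζ : Real.log ζ = min ((lam / 2 - L) / (γ / 2) - 1) (-1) := Real.log_exp _
  have hlogζneg : Real.log ζ < 0 := by
    rw [hlogζ]; exact lt_of_le_of_lt (min_le_right _ _) (by norm_num)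
  have hkey : γ / 2 * Real.log ζ < lam / 2 - L := by
    have h1 : γ / 2 * Real.log ζ ≤ γ / 2 * ((lam / 2 - L) / (γ / 2) - 1) := by
      rw [hlogζ]
      exact mul_le_mul_of_nonneg_left (min_le_left _ _) (by linarith)
    have hγ2 : (γ : ℝ) / 2 ≠ 0 := by positivity
    have h2 : γ / 2 * ((lam / 2 - L) / (γ / 2) - 1) = lam / 2 - L - γ / 2 := by
      field_simp
    linarith [h1, h2.le, h2.ge]
  obtain ⟨ε, hεpos, hε⟩ := hequi ζ hζpos
  refine ⟨ε, hεpos, ?_⟩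
  have hmem := ae_restrict_mem (μ := volume) (measurableSet_Icc : MeasurableSet (Icc a b))
  filter_upwards [hlyap, hmem] with x hlx hxI
  -- the orbit stays in `Icc a b`
  have horb : ∀ j, comp f j x ∈ Icc a b := by
    intro j; induction j with
    | zero => exact hxI
    | succ j ih => exact hmaps j ih
  set u : ℕ → ℝ := fun n => (1 / (n : ℝ)) * Real.log |Dcomp f n x| with hudef
  -- the derivative of the composition never vanishes
  have hD0 : ∀ n, Dcomp f n x ≠ 0 := by
    intro n hn
    unfold Dcomp at hn
    obtain ⟨j, hj, hj0⟩ := Finset.prod_eq_zero_iff.mp hn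
    have hzero : ∀ m, n ≤ m → Dcomp f m x = 0 := fun m hm =>
      Finset.prod_eq_zero (Finset.mem_range.mpr (lt_of_lt_of_le (Finset.mem_range.mp hj) hm)) hj0
    have hconst : liminf u atTop = 0 := by
      have hev : ∀ᶠ m in atTop, u m = (fun _ : ℕ => (0 : ℝ)) m := by
        filter_upwards [eventually_ge_atTop n] with m hm
        simp [hudef, hzero m hm]
      rw [liminf_congr hev]
      exact liminf_const 0
    rw [hconst] at hlx; linarith
  -- eventual lower bound `lam/2 < u n`
  have hev : ∀ᶠ n in atTop, lam / 2 < u n := by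
    have hlx' : lam ≤ sSup { c : ℝ | ∀ᶠ n in atTop, c ≤ u n } := by
      rw [← liminf_eq]; exact hlx
    have hSne : { c : ℝ | ∀ᶠ n in atTop, c ≤ u n }.Nonempty := by
      by_contra h
      rw [Set.not_nonempty_iff_eq_empty] at h
      rw [h, Real.sSup_empty] at hlx'
      linarith
    obtain ⟨c, hcS, hc⟩ := exists_lt_of_lt_csSup hSne
      (lt_of_lt_of_le (half_lt_self hlam) hlx')
    filter_upwards [hcS] with n hn
    exact lt_of_lt_of_le hc hn
  set P : ℕ → Prop := fun j => ∃ c ∈ Icc a b,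
      deriv (f j) c = 0 ∧ |comp f j x - c| < ε with hPdef
  set N : ℕ → ℕ := fun n => ((Finset.range n).filter P).card with hNdef
  -- the product estimate
  have hprod : ∀ n, |Dcomp f n x| ≤ ζ ^ N n * Γ' ^ (n - N n) := by
    intro n
    have h1 : |Dcomp f n x| = ∏ j ∈ Finset.range n, |deriv (f j) (comp f j x)| := by
      unfold Dcomp; exact Finset.abs_prod _ _
    rw [h1]
    have h2 : ∀ j ∈ Finset.range n,
        |deriv (f j) (comp f j x)| ≤ if P j then ζ else Γ' := by
      intro j _
      by_cases hP : P j
      · rw [if_pos hP]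
        obtain ⟨c, hc, hc0, hcd⟩ := hP
        have h3 := (hε j (comp f j x) (horb j) c hc hcd).2
        rw [hc0, sub_zero] at h3
        exact h3.le
      · rw [if_neg hP]
        exact le_trans (hbdd j _ (horb j)).2 (le_max_left _ _)
    calc ∏ j ∈ Finset.range n, |deriv (f j) (comp f j x)|
        ≤ ∏ j ∈ Finset.range n, (if P j then ζ else Γ') :=
          Finset.prod_le_prod (fun j _ => abs_nonneg _) h2
      _ = ζ ^ N n * Γ' ^ ((Finset.range n).filter (fun j => ¬ P j)).card := by
          rw [Finset.prod_ite]
          simp [Finset.prod_const]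
          exact Or.inl rfl
      _ = ζ ^ N n * Γ' ^ (n - N n) := by
          congr 2
          have := Finset.card_filter_add_card_filter_not
            (s := Finset.range n) (p := P)
          rw [Finset.card_range] at this
          have hNn' : N n = ((Finset.range n).filter P).card := rfl
          omega
  -- logarithmic estimate
  have hlog : ∀ n, Real.log |Dcomp f n x| ≤ (N n : ℝ) * Real.log ζ + (n : ℝ) * L := by
    intro n
    have hpos : 0 < |Dcomp f n x| := abs_pos.mpr (hD0 n)
    have h1 : Real.log |Dcomp f n x| ≤ Real.log (ζ ^ N n * Γ' ^ (n - N n)) :=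
      Real.log_le_log hpos (hprod n)
    have h2 : Real.log (ζ ^ N n * Γ' ^ (n - N n))
        = (N n : ℝ) * Real.log ζ + ((n - N n : ℕ) : ℝ) * L := by
      rw [Real.log_mul (pow_ne_zero _ hζpos.ne') (pow_ne_zero _ hΓ'pos.ne'),
        Real.log_pow, Real.log_pow]
    have h3 : ((n - N n : ℕ) : ℝ) ≤ (n : ℝ) := by
      exact_mod_cast Nat.sub_le n (N n)
    nlinarith [hL, h1, h2.le, h3]
  -- eventual frequency bound
  have hNn : ∀ᶠ n : ℕ in atTop, (1 / (n : ℝ)) * (N n : ℝ) ≤ γ / 2 := by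
    filter_upwards [hev, eventually_ge_atTop 1] with n hn hn1
    have hnpos : (0 : ℝ) < n := by exact_mod_cast hn1
    have h0 : lam / 2 < (1 / (n : ℝ)) * Real.log |Dcomp f n x| := hn
    have h1 : (n : ℝ) * (lam / 2) < Real.log |Dcomp f n x| := by
      have h1' := mul_lt_mul_of_pos_left h0 hnpos
      have h1'' : (n : ℝ) * ((1 / (n : ℝ)) * Real.log |Dcomp f n x|)
          = Real.log |Dcomp f n x| := by
        field_simp
      rwa [h1''] at h1'
    have h2 := hlog n
    have h3 : (n : ℝ) * (lam / 2 - L) < (N n : ℝ) * Real.log ζ := by nlinarith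
    have h4 : (n : ℝ) * (γ / 2) * Real.log ζ < (n : ℝ) * (lam / 2 - L) := by
      nlinarith [hkey, hnpos]
    have h5 : (N n : ℝ) < (n : ℝ) * (γ / 2) := by nlinarith [hlogζneg, h3, h4]
    rw [one_div_mul_eq_div, div_le_iff₀ hnpos]
    linarith [h5]
  -- conclude about the limsup
  have hcard : ∀ n : ℕ, ({j : ℕ | j < n ∧ P j} : Set ℕ).ncard = N n := by
    intro n
    have hset : ({j : ℕ | j < n ∧ P j} : Set ℕ) = ((Finset.range n).filter P : Finset ℕ) := by
      ext j
      simp [Finset.mem_filter, Finset.mem_range]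
    rw [hset, Set.ncard_coe_finset]
  have hfun : (fun n : ℕ => (1 / (n : ℝ)) *
      (Set.ncard {j : ℕ | j < n ∧ ∃ c ∈ Icc a b,
        deriv (f j) c = 0 ∧ |comp f j x - c| < ε} : ℝ))
      = fun n : ℕ => (1 / (n : ℝ)) * (N n : ℝ) := by
    funext n
    rw [show {j : ℕ | j < n ∧ ∃ c ∈ Icc a b,
        deriv (f j) c = 0 ∧ |comp f j x - c| < ε} = {j : ℕ | j < n ∧ P j} from rfl, hcard n]
  rw [hfun]
  have hcb : IsCoboundedUnder (· ≤ ·) atTop (fun n : ℕ => (1 / (n : ℝ)) * (N n : ℝ)) :=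
    isCoboundedUnder_le_of_le atTop (x := 0) (fun n => mul_nonneg (one_div_nonneg.mpr (Nat.cast_nonneg n)) (Nat.cast_nonneg _))
  exact lt_of_le_of_lt (limsup_le_of_le hcb hNn) (half_lt_self hγ)
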